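/- Optimal base-stock threshold for the normalized inventory-control cost with exponential demand. Let a_p, a_h, a_b > 0, γ ∈ (0,1), and λ > 0, and assume a_b > a_p (1 − γ)/γ. Define the normalized cost C : ℝ → ℝ by C(s) = a_p s (1 − γ)/γ + a_h s·1_{s ≥ 0} − a_b s·1_{s < 0}, and define G : ℝ → ℝ by G(θ) = ∫_0^∞ C(θ − x) λ e^{−λ x} dx (the expectation of C(θ − D) for D exponentially distributed with rate λ). Then θ* = (1/λ) · log((a_h + a_b)/(a_h + a_p(1 − γ)/γ)) satisfies θ* > 0 and is the unique global minimizer of G: for every θ ≠ θ*, G(θ*) < G(θ). -/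

import Mathlib

open MeasureTheory
open Real Filter Set

private lemma inv_aux_tendsto (l c d : ℝ) (hl : 0 < l) :
    Tendsto (fun x => (c * x + d) * Real.exp (-(l * x))) atTop (nhds 0) := by
  have hT : Tendsto (fun x : ℝ => l * x) atTop atTop := tendsto_id.const_mul_atTop hl
  have h1 : Tendsto (fun x : ℝ => (l * x) * Real.exp (-(l * x))) atTop (nhds 0) := by
    have := (Real.tendsto_pow_mul_exp_neg_atTop_nhds_zero 1).comp hT
    simpa [Function.comp_def] using this
  have h2 : Tendsto (fun x : ℝ => Real.exp (-(l * x))) atTop (nhds 0) :=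
    Real.tendsto_exp_neg_atTop_nhds_zero.comp hT
  have h3 := ((h1.const_mul (c / l)).add (h2.const_mul d))
  rw [mul_zero, mul_zero, add_zero] at h3
  refine h3.congr (fun x => ?_)
  field_simp

private lemma inv_aux_exp_deriv (l : ℝ) (x : ℝ) :
    HasDerivAt (fun x => -Real.exp (-(l * x))) (l * Real.exp (-(l * x))) x := by
  have h : HasDerivAt (fun x : ℝ => -(l * x)) (-l) x := by
    simpa [Pi.neg_def] using ((hasDerivAt_id x).const_mul l).neg
  have := (Real.hasDerivAt_exp (-(l * x))).comp x h
  simpa [mul_comm, Function.comp_def, Pi.neg_def] using this.neg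

private lemma inv_aux_exp_int (l : ℝ) (hl : 0 < l) (a : ℝ) :
    IntegrableOn (fun x => l * Real.exp (-(l * x))) (Set.Ioi a) ∧
      ∫ x in Set.Ioi a, l * Real.exp (-(l * x)) = Real.exp (-(l * a)) := by
  have hint : IntegrableOn (fun x => l * Real.exp (-(l * x))) (Set.Ioi a) := by
    have := (exp_neg_integrableOn_Ioi a hl).const_mul l
    simp only [neg_mul] at this; exact this
  refine ⟨hint, ?_⟩
  have htend : Tendsto (fun x => -Real.exp (-(l * x))) atTop (nhds 0) := by
    have := inv_aux_tendsto l 0 (-1) hl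
    refine this.congr (fun x => by ring)
  have := integral_Ioi_of_hasDerivAt_of_tendsto' (f := fun x => -Real.exp (-(l * x)))
    (m := 0) (fun x _ => inv_aux_exp_deriv l x) hint htend
  simpa using this

private lemma inv_aux_xexp_deriv (l : ℝ) (hl : 0 < l) (x : ℝ) :
    HasDerivAt (fun x => -(x + 1 / l) * Real.exp (-(l * x)))
      (x * (l * Real.exp (-(l * x)))) x := by
  have h1 : HasDerivAt (fun x : ℝ => -(x + 1 / l)) (-1) x := by
    exact ((hasDerivAt_id x).add_const (1 / l)).neg
  have h2 : HasDerivAt (fun x : ℝ => Real.exp (-(l * x))) (-l * Real.exp (-(l * x))) x := by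
    have h : HasDerivAt (fun x : ℝ => -(l * x)) (-l) x := by
      simpa [Pi.neg_def] using ((hasDerivAt_id x).const_mul l).neg
    simpa [mul_comm, Function.comp_def] using (Real.hasDerivAt_exp (-(l * x))).comp x h
  have := h1.mul h2
  refine this.congr_deriv ?_
  linear_combination (Real.exp (-(l * x))) * (one_div_mul_cancel hl.ne')

private lemma inv_aux_J (l : ℝ) (hl : 0 < l) (θ a : ℝ) (ha : 0 ≤ a) :
    IntegrableOn (fun x => (θ - x) * (l * Real.exp (-(l * x)))) (Set.Ioi a) ∧
      ∫ x in Set.Ioi a, (θ - x) * (l * Real.exp (-(l * x)))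
        = (θ - a - 1 / l) * Real.exp (-(l * a)) := by
  obtain ⟨hE, hEval⟩ := inv_aux_exp_int l hl a
  have htend : Tendsto (fun x => -(x + 1 / l) * Real.exp (-(l * x))) atTop (nhds 0) := by
    have := inv_aux_tendsto l (-1) (-(1 / l)) hl
    refine this.congr (fun x => by ring)
  have hpos : ∀ x ∈ Set.Ioi a, 0 ≤ x * (l * Real.exp (-(l * x))) := by
    intro x hx
    have : (0:ℝ) ≤ x := le_trans ha (le_of_lt hx)
    positivity
  have hXint : IntegrableOn (fun x => x * (l * Real.exp (-(l * x)))) (Set.Ioi a) :=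
    integrableOn_Ioi_deriv_of_nonneg' (fun x _ => inv_aux_xexp_deriv l hl x) hpos htend
  have hXval : ∫ x in Set.Ioi a, x * (l * Real.exp (-(l * x)))
      = (a + 1 / l) * Real.exp (-(l * a)) := by
    have := integral_Ioi_of_hasDerivAt_of_nonneg' (fun x _ => inv_aux_xexp_deriv l hl x)
      hpos htend
    rw [this]; ring
  constructor
  · have h := (hE.const_mul θ).sub hXint
    refine (integrableOn_congr_fun (fun x _ => ?_) measurableSet_Ioi).mpr h
    simp only [Pi.sub_apply]; ring
  · have heq : ∀ x : ℝ, (θ - x) * (l * Real.exp (-(l * x)))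
        = θ * (l * Real.exp (-(l * x))) - x * (l * Real.exp (-(l * x))) := fun x => by ring
    rw [show (fun x => (θ - x) * (l * Real.exp (-(l * x))))
        = fun x => θ * (l * Real.exp (-(l * x))) - x * (l * Real.exp (-(l * x)))
        from funext heq]
    rw [integral_sub (hE.const_mul θ) hXint, integral_const_mul, hEval, hXval]
    ring

/-- **Optimal base-stock threshold for the normalized inventory cost with
exponential demand.** Let `a_p, a_h, a_b > 0`, `γ ∈ (0,1)`, `l > 0`, with
`a_b > a_p (1 − γ)/γ`. With the normalized cost
`C(s) = a_p s (1 − γ)/γ + a_h s 1_{s ≥ 0} − a_b s 1_{s < 0}` and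
`G(θ) = ∫_0^∞ C(θ − x) l e^{−l x} dx`, the threshold
`θ* = (1/l) log((a_h + a_b)/(a_h + a_p(1 − γ)/γ))` is positive and is the
unique global minimizer of `G`. -/
theorem inventory_optimal_threshold
    (a_p a_h a_b γ l : ℝ)
    (hap : 0 < a_p) (hah : 0 < a_h) (hab : 0 < a_b) (hl : 0 < l)
    (hγ : γ ∈ Set.Ioo (0 : ℝ) 1)
    (hb : a_p * (1 - γ) / γ < a_b)
    (C : ℝ → ℝ)
    (hC : ∀ s, C s = a_p * s * (1 - γ) / γ
      + (if 0 ≤ s then a_h * s else 0) - (if s < 0 then a_b * s else 0))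
    (G : ℝ → ℝ)
    (hG : ∀ θ, G θ = ∫ x in Set.Ioi (0 : ℝ), C (θ - x) * (l * Real.exp (-l * x)))
    (θstar : ℝ)
    (hθstar : θstar = (1 / l) * Real.log ((a_h + a_b) / (a_h + a_p * (1 - γ) / γ))) :
    0 < θstar ∧ ∀ θ : ℝ, θ ≠ θstar → G θstar < G θ := by
  obtain ⟨hγ0, hγ1⟩ := hγ
  set b : ℝ := a_p * (1 - γ) / γ with hbdef
  have hbpos : 0 < b := div_pos (mul_pos hap (by linarith)) hγ0
  have hA : 0 < a_h + b := by linarith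
  have hBc : 0 < a_h + a_b := by linarith
  have hCeq : ∀ s, C s = (b - a_b) * s + (a_h + a_b) * max s 0 := by
    intro s
    rw [hC, hbdef]
    rcases le_or_gt 0 s with h | h
    · rw [if_pos h, if_neg (not_lt.mpr h), max_eq_left h]; ring
    · rw [if_neg (not_le.mpr h), if_pos h, max_eq_right h.le]; ring
  -- closed forms for G
  have hGneg : ∀ θ : ℝ, θ ≤ 0 → G θ = (b - a_b) * (θ - 1 / l) := by
    intro θ hθ
    rw [hG]
    simp only [neg_mul]
    have h1 := inv_aux_J l hl θ 0 le_rfl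
    rw [setIntegral_congr_fun measurableSet_Ioi
      (g := fun x => (b - a_b) * ((θ - x) * (l * Real.exp (-(l * x)))))
      (fun x hx => by
        have hx' : (0:ℝ) < x := hx
        have hs : θ - x < 0 := by linarith
        rw [hCeq, max_eq_right hs.le]; ring)]
    rw [integral_const_mul, h1.2]
    simp [Real.exp_zero]
  have hGpos : ∀ θ : ℝ, 0 ≤ θ → G θ = (a_h + b) * θ - (a_h + b) / l
      + (a_h + a_b) * Real.exp (-(l * θ)) / l := by
    intro θ hθ
    rw [hG]
    simp only [neg_mul]
    have hJ0 := inv_aux_J l hl θ 0 le_rfl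
    have hJθ := inv_aux_J l hl θ θ hθ
    set f : ℝ → ℝ := fun x => (θ - x) * (l * Real.exp (-(l * x))) with hf
    have hIocInt : IntegrableOn f (Set.Ioc 0 θ) := hJ0.1.mono_set Set.Ioc_subset_Ioi_self
    have hsplitf : ∫ x in Set.Ioi (0:ℝ), f x
        = (∫ x in Set.Ioc 0 θ, f x) + ∫ x in Set.Ioi θ, f x := by
      rw [← Set.Ioc_union_Ioi_eq_Ioi hθ]
      exact setIntegral_union (Set.Ioc_disjoint_Ioi le_rfl) measurableSet_Ioi hIocInt hJθ.1
    have hIoc : ∫ x in Set.Ioc 0 θ, f x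
        = (θ - 0 - 1 / l) * Real.exp (-(l * 0)) - (θ - θ - 1 / l) * Real.exp (-(l * θ)) := by
      have := hsplitf
      rw [hJ0.2, hJθ.2] at this
      linarith
    -- integrability of the C-integrand on the two pieces
    have hInt1 : IntegrableOn (fun x => C (θ - x) * (l * Real.exp (-(l * x))))
        (Set.Ioc 0 θ) := by
      refine (integrableOn_congr_fun (g := fun x => (a_h + b) * f x) (fun x hx => ?_)
        measurableSet_Ioc).mpr (hIocInt.const_mul _)
      have hs : 0 ≤ θ - x := by
        have := hx.2; linarith
      rw [hCeq, max_eq_left hs, hf]; ring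
    have hInt2 : IntegrableOn (fun x => C (θ - x) * (l * Real.exp (-(l * x))))
        (Set.Ioi θ) := by
      refine (integrableOn_congr_fun (g := fun x => (b - a_b) * f x) (fun x hx => ?_)
        measurableSet_Ioi).mpr (hJθ.1.const_mul _)
      have hx' : θ < x := hx
      have hs : θ - x < 0 := by linarith
      rw [hCeq, max_eq_right hs.le, hf]; ring
    have hsplit : ∫ x in Set.Ioi (0:ℝ), C (θ - x) * (l * Real.exp (-(l * x)))
        = (∫ x in Set.Ioc 0 θ, C (θ - x) * (l * Real.exp (-(l * x))))
          + ∫ x in Set.Ioi θ, C (θ - x) * (l * Real.exp (-(l * x))) := by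
      rw [← Set.Ioc_union_Ioi_eq_Ioi hθ]
      exact setIntegral_union (Set.Ioc_disjoint_Ioi le_rfl) measurableSet_Ioi hInt1 hInt2
    rw [hsplit]
    rw [setIntegral_congr_fun measurableSet_Ioc
      (g := fun x => (a_h + b) * f x)
      (fun x hx => by
        have hs : 0 ≤ θ - x := by have := hx.2; linarith
        rw [hCeq, max_eq_left hs, hf]; ring)]
    rw [setIntegral_congr_fun measurableSet_Ioi
      (g := fun x => (b - a_b) * f x)
      (fun x hx => by
        have hx' : θ < x := hx
        have hs : θ - x < 0 := by linarith
        rw [hCeq, max_eq_right hs.le, hf]; ring)]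
    rw [integral_const_mul, integral_const_mul, hIoc, hJθ.2]
    simp only [mul_zero, neg_zero, Real.exp_zero]
    field_simp
    ring
  -- positivity of θstar and the exponential identity
  have hR : (1:ℝ) < (a_h + a_b) / (a_h + b) := (one_lt_div hA).mpr (by linarith)
  have hθpos : 0 < θstar := by
    rw [hθstar]
    exact mul_pos (by positivity) (Real.log_pos hR)
  have hexpstar : Real.exp (-(l * θstar)) = (a_h + b) / (a_h + a_b) := by
    rw [hθstar]
    rw [show l * (1 / l * Real.log ((a_h + a_b) / (a_h + b))) =
        Real.log ((a_h + a_b) / (a_h + b)) by field_simp]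
    rw [Real.exp_neg, Real.exp_log (by positivity)]
    rw [inv_div]
  -- key inequality for θ ≥ 0
  have key : ∀ θ : ℝ, 0 ≤ θ → θ ≠ θstar → G θstar < G θ := by
    intro θ hθ hne
    rw [hGpos θ hθ, hGpos θstar hθpos.le]
    have hu : l * (θ - θstar) ≠ 0 := mul_ne_zero hl.ne' (sub_ne_zero.mpr hne)
    have hlt : -(l * (θ - θstar)) + 1 < Real.exp (-(l * (θ - θstar))) :=
      Real.add_one_lt_exp (neg_ne_zero.mpr hu)
    have hexp2 : Real.exp (-(l * θ))
        = Real.exp (-(l * θstar)) * Real.exp (-(l * (θ - θstar))) := by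
      rw [← Real.exp_add]; ring_nf
    rw [hexp2, hexpstar]
    set E := Real.exp (-(l * (θ - θstar))) with hE
    have hfact : 0 < (a_h + b) / l * (l * (θ - θstar) + E - 1) :=
      mul_pos (div_pos hA hl) (by linarith)
    have hexpand : (a_h + b) / l * (l * (θ - θstar) + E - 1)
        = ((a_h + b) * θ - (a_h + b) / l + (a_h + a_b) * ((a_h + b) / (a_h + a_b) * E) / l)
          - ((a_h + b) * θstar - (a_h + b) / l
            + (a_h + a_b) * ((a_h + b) / (a_h + a_b)) / l) := by
      field_simp
      ring
    linarith [hexpand ▸ hfact]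
  refine ⟨hθpos, fun θ hne => ?_⟩
  rcases le_or_gt 0 θ with hθ | hθ
  · exact key θ hθ hne
  · have h0 : G θstar < G 0 := key 0 le_rfl (by linarith)
    have h1 : G 0 < G θ := by
      rw [hGneg θ hθ.le, hGneg 0 le_rfl]
      have : b - a_b < 0 := by linarith
      nlinarith
    linarith
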